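/- Let δ > 0 and h ∈ K, and set Ψ_h(x) = 1 + δ·h(x). Then for every x ≥ 0, ∫₀^x (1/Ψ_h(η)) · exp(−2∫₀^η ξ/Ψ_h(ξ) dξ) dη ≤ √(π(1+δ)) / 2. -/

import Mathlib

open Real MeasureTheory Filter

/-- `Ψ_h(x) = 1 + δ·h(x)`. -/
noncomputable def Psi (δ : ℝ) (h : ℝ → ℝ) (x : ℝ) : ℝ := 1 + δ * h x

/-- The integrand `(1/Ψ_h(η)) · exp(−2∫₀^η ξ/Ψ_h(ξ) dξ)`. -/
noncomputable def F (δ : ℝ) (h : ℝ → ℝ) (η : ℝ) : ℝ :=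
  (1 / Psi δ h η) * Real.exp (-2 * ∫ ξ in (0:ℝ)..η, ξ / Psi δ h ξ)

/-- The full integral `∫₀^∞ (1/Ψ_h(η)) · exp(−2∫₀^η ξ/Ψ_h(ξ) dξ) dη`. -/
noncomputable def Itot (δ : ℝ) (h : ℝ → ℝ) : ℝ := ∫ η in Set.Ioi (0:ℝ), F δ h η

/-- The constant `C_h`. -/
noncomputable def Ch (δ : ℝ) (h : ℝ → ℝ) : ℝ := (Itot δ h)⁻¹

/-- Membership in the set `K`: analytic on `[0,∞)`, `0 ≤ h ≤ 1` there,
`h(0) = 0` and `h(x) → 1` as `x → ∞`. -/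
def MemK (h : ℝ → ℝ) : Prop :=
  AnalyticOnNhd ℝ h (Set.Ici 0) ∧ (∀ x ≥ 0, 0 ≤ h x ∧ h x ≤ 1) ∧ h 0 = 0 ∧
    Tendsto h atTop (nhds 1)

/-- Supremum norm over `[0,∞)`. -/
noncomputable def supNorm (f : ℝ → ℝ) : ℝ := ⨆ x : Set.Ici (0:ℝ), |f (x : ℝ)|

theorem integral_upper_bound (δ : ℝ) (hδ : 0 < δ)
    (h : ℝ → ℝ) (hK : MemK h) (x : ℝ) (hx : 0 ≤ x) :
    ∫ η in (0:ℝ)..x, F δ h η ≤ Real.sqrt (π * (1 + δ)) / 2 := by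
  have hδ1 : (0:ℝ) < 1 + δ := by linarith
  have hΨcont : ContinuousOn (Psi δ h) (Set.Ici 0) :=
    continuousOn_const.add (continuousOn_const.mul hK.1.continuousOn)
  have hΨ1 : ∀ ξ ∈ Set.Ici (0:ℝ), 1 ≤ Psi δ h ξ := by
    intro ξ hξ
    have := (hK.2.1 ξ hξ).1
    have : 0 ≤ δ * h ξ := mul_nonneg hδ.le this
    simp [Psi]; linarith
  have hΨub : ∀ ξ ∈ Set.Ici (0:ℝ), Psi δ h ξ ≤ 1 + δ := by
    intro ξ hξ
    have := (hK.2.1 ξ hξ).2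
    have : δ * h ξ ≤ δ * 1 := mul_le_mul_of_nonneg_left this hδ.le
    simp [Psi]; linarith
  set G : ℝ → ℝ := fun η => Real.exp (-(1 + δ)⁻¹ * η ^ 2) with hG
  have hGint : Integrable G := integrable_exp_neg_mul_sq (by positivity)
  -- pointwise bound F ≤ G on [0, x]
  have hbound : ∀ η ∈ Set.Icc 0 x, F δ h η ≤ G η := by
    intro η hη
    have hη0 : (0:ℝ) ≤ η := hη.1
    -- inner integral lower bound
    have hinner : η ^ 2 / (2 * (1 + δ)) ≤ ∫ ξ in (0:ℝ)..η, ξ / Psi δ h ξ := by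
      have hfint : IntervalIntegrable (fun ξ => ξ / (1 + δ)) volume 0 η :=
        (continuous_id.div_const _).intervalIntegrable _ _
      have hgint : IntervalIntegrable (fun ξ => ξ / Psi δ h ξ) volume 0 η := by
        apply ContinuousOn.intervalIntegrable
        rw [Set.uIcc_of_le hη0]
        apply ContinuousOn.div continuousOn_id
          (hΨcont.mono (fun t ht => ht.1))
        intro t ht
        have := hΨ1 t ht.1
        linarith
      have hmono := intervalIntegral.integral_mono_on hη0 hfint hgint
        (fun ξ hξ => by
          have h1 := hΨ1 ξ hξ.1
          have h2 := hΨub ξ hξ.1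
          gcongr
          · exact hξ.1)
      calc η ^ 2 / (2 * (1 + δ)) = ∫ ξ in (0:ℝ)..η, ξ / (1 + δ) := by
            rw [intervalIntegral.integral_div, integral_id]
            field_simp
            ring
        _ ≤ _ := hmono
    have hΨη1 := hΨ1 η hη0
    have hΨηpos : 0 < Psi δ h η := by linarith
    have h1 : 1 / Psi δ h η ≤ 1 := by
      rw [div_le_one hΨηpos]; exact hΨη1
    have h2 : Real.exp (-2 * ∫ ξ in (0:ℝ)..η, ξ / Psi δ h ξ) ≤ G η := by
      apply Real.exp_le_exp.mpr
      have : -2 * ∫ ξ in (0:ℝ)..η, ξ / Psi δ h ξ ≤ -2 * (η ^ 2 / (2 * (1 + δ))) := by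
        nlinarith
      calc -2 * ∫ ξ in (0:ℝ)..η, ξ / Psi δ h ξ ≤ -2 * (η ^ 2 / (2 * (1 + δ))) := this
        _ = -(1 + δ)⁻¹ * η ^ 2 := by field_simp
    calc F δ h η ≤ 1 * G η := by
          apply mul_le_mul h1 h2 (Real.exp_pos _).le zero_le_one
      _ = G η := one_mul _
  have hGpos : ∀ η, 0 ≤ G η := fun η => (Real.exp_pos _).le
  by_cases hFint : IntervalIntegrable (F δ h) volume 0 x
  · have step1 : ∫ η in (0:ℝ)..x, F δ h η ≤ ∫ η in (0:ℝ)..x, G η :=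
      intervalIntegral.integral_mono_on hx hFint
        hGint.intervalIntegrable hbound
    have step2 : ∫ η in (0:ℝ)..x, G η ≤ ∫ η in Set.Ioi (0:ℝ), G η := by
      rw [intervalIntegral.integral_of_le hx]
      apply setIntegral_mono_set hGint.integrableOn
        (Filter.Eventually.of_forall hGpos)
      exact HasSubset.Subset.eventuallyLE Set.Ioc_subset_Ioi_self
    have step3 : ∫ η in Set.Ioi (0:ℝ), G η = Real.sqrt (π * (1 + δ)) / 2 := by
      rw [hG]
      rw [integral_gaussian_Ioi]
      congr 1
      field_simp

    linarith
  · rw [intervalIntegral.integral_undef hFint]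
    positivity
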